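/- Suppose the sequence (Aₘ)_{m∈ℤ} of bounded linear operators on a Banach space X admits an exponential dichotomy with respect to the sequence of norms ‖·‖ₘ, and let B be an admissible Banach sequence space. Then the operator T_B : D(T_B) ⊂ Y_B → Y_B, (T_B x)ₙ = xₙ − A_{n−1}x_{n−1}, is surjective: for every y ∈ Y_B the sequence x given by xₙ = Σ_{m≥0} A(n, n−m)P_{n−m}y_{n−m} − Σ_{m≥1} A(n, n+m)Q_{n+m}y_{n+m} lies in Y_B and satisfies T_B x = y. -/

import Mathlib

/-- A Banach sequence space: a linear subspace of the real sequences indexed by `ℤ`,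
with a norm that is monotone with respect to pointwise absolute value, and complete. -/
structure BanachSeqSpace where
  mem : (ℤ → ℝ) → Prop
  bnorm : (ℤ → ℝ) → ℝ
  zero_mem : mem 0
  add_mem : ∀ {s t : ℤ → ℝ}, mem s → mem t → mem (s + t)
  smul_mem : ∀ (c : ℝ) {s : ℤ → ℝ}, mem s → mem (c • s)
  bnorm_nonneg : ∀ s : ℤ → ℝ, 0 ≤ bnorm s
  bnorm_eq_zero : ∀ {s : ℤ → ℝ}, mem s → (bnorm s = 0 ↔ s = 0)
  bnorm_add_le : ∀ {s t : ℤ → ℝ}, mem s → mem t → bnorm (s + t) ≤ bnorm s + bnorm t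
  bnorm_smul : ∀ (c : ℝ) (s : ℤ → ℝ), bnorm (c • s) = |c| * bnorm s
  mono_mem : ∀ {s t : ℤ → ℝ}, mem t → (∀ n, |s n| ≤ |t n|) → mem s
  mono_norm : ∀ {s t : ℤ → ℝ}, mem t → (∀ n, |s n| ≤ |t n|) → bnorm s ≤ bnorm t
  complete : ∀ u : ℕ → ℤ → ℝ, (∀ k, mem (u k)) →
    (∀ ε : ℝ, 0 < ε → ∃ K : ℕ, ∀ k l, K ≤ k → K ≤ l → bnorm (u k - u l) < ε) →
    ∃ s : ℤ → ℝ, mem s ∧ ∀ ε : ℝ, 0 < ε → ∃ K : ℕ, ∀ k, K ≤ k → bnorm (u k - s) < ε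

/-- An admissible Banach sequence space: contains the characteristic functions of
singletons with positive norm, and is invariant under shifts with a uniform bound `N`. -/
structure AdmissibleSeqSpace extends BanachSeqSpace where
  N : ℝ
  N_pos : 0 < N
  indicator_mem : ∀ n : ℤ, mem (fun k => if k = n then (1 : ℝ) else 0)
  indicator_pos : ∀ n : ℤ, 0 < bnorm (fun k => if k = n then (1 : ℝ) else 0)
  shift_mem : ∀ {s : ℤ → ℝ}, mem s → ∀ m : ℤ, mem (fun n => s (n + m))
  shift_norm : ∀ {s : ℤ → ℝ}, mem s → ∀ m : ℤ, bnorm (fun n => s (n + m)) ≤ N * bnorm s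

/-- `opComp A k m` is the composition `A(m+k, m) = A_{m+k-1} ∘ ⋯ ∘ A_m`
(the identity when `k = 0`). -/
def opComp {X : Type*} [NormedAddCommGroup X] [NormedSpace ℝ X]
    (A : ℤ → X →L[ℝ] X) : ℕ → ℤ → X →L[ℝ] X
  | 0, _ => ContinuousLinearMap.id ℝ X
  | k + 1, m => (A (m + k)).comp (opComp A k m)

section Aux

variable {X : Type*} [NormedAddCommGroup X] [NormedSpace ℝ X]

lemma opComp_succ' (A : ℤ → X →L[ℝ] X) (k : ℕ) (m : ℤ) :
    opComp A (k+1) m = (opComp A k (m+1)).comp (A m) := by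
  induction k generalizing m with
  | zero =>
      ext v
      simp [opComp]
  | succ k ih =>
      ext v
      have h1 : opComp A (k+1+1) m = (A (m + (k+1 : ℕ))).comp (opComp A (k+1) m) := rfl
      have h2 : opComp A (k+1) (m+1) = (A ((m+1) + (k : ℕ))).comp (opComp A k (m+1)) := rfl
      rw [h1, ih, h2]
      have h3 : m + ((k:ℤ)+1) = (m+1) + (k:ℤ) := by ring
      simp only [ContinuousLinearMap.comp_apply]
      push_cast
      rw [h3]

lemma opComp_ker (A P : ℤ → X →L[ℝ] X)
    (hcomm : ∀ (m : ℤ) (v : X), A m (P m v) = P (m + 1) (A m v)) :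
    ∀ (k : ℕ) (m : ℤ) (v : X), P m v = 0 → P (m + k) (opComp A k m v) = 0 := by
  intro k
  induction k with
  | zero => intro m v hv; simpa [opComp] using hv
  | succ k ih =>
      intro m v hv
      have h1 : P (m + k) (opComp A k m v) = 0 := ih m v hv
      have h2 := hcomm (m + k) (opComp A k m v)
      rw [h1, map_zero] at h2
      have h3 : opComp A (k+1) m v = A (m + k) (opComp A k m v) := rfl
      rw [h3, show m + ((k:ℕ)+1 : ℕ) = (m + (k:ℤ)) + 1 by push_cast; ring]
      exact h2.symm

lemma opComp_inj (A P : ℤ → X →L[ℝ] X)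
    (hcomm : ∀ (m : ℤ) (v : X), A m (P m v) = P (m + 1) (A m v))
    (hbij : ∀ m : ℤ, Set.BijOn (A m) {v : X | P m v = 0} {v : X | P (m + 1) v = 0}) :
    ∀ (k : ℕ) (m : ℤ) (u v : X), P m u = 0 → P m v = 0 →
      opComp A k m u = opComp A k m v → u = v := by
  intro k
  induction k with
  | zero => intro m u v _ _ h; simpa [opComp] using h
  | succ k ih =>
      intro m u v hu hv h
      refine ih m u v hu hv ?_
      have hu' : P (m + k) (opComp A k m u) = 0 := opComp_ker A P hcomm k m u hu
      have hv' : P (m + k) (opComp A k m v) = 0 := opComp_ker A P hcomm k m v hv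
      have h' : A (m + k) (opComp A k m u) = A (m + k) (opComp A k m v) := h
      exact (hbij (m + k)).injOn hu' hv' h'

lemma q_finsum_le (q : X → ℝ) (hq0 : q 0 = 0)
    (hqadd : ∀ u v : X, q (u+v) ≤ q u + q v) (f : ℕ → X) (k : ℕ) :
    q (∑ i ∈ Finset.range k, f i) ≤ ∑ i ∈ Finset.range k, q (f i) := by
  induction k with
  | zero => simp [hq0]
  | succ k ih =>
      rw [Finset.sum_range_succ, Finset.sum_range_succ]
      exact le_trans (hqadd _ _) (by linarith)

lemma q_tsum_le (q : X → ℝ) (hq0 : q 0 = 0)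
    (hqadd : ∀ u v : X, q (u+v) ≤ q u + q v) (hqneg : ∀ v : X, q (-v) = q v)
    (hqnn : ∀ v : X, 0 ≤ q v)
    (C : ℝ) (hqC : ∀ v : X, q v ≤ C * ‖v‖)
    (f : ℕ → X) (hf : Summable f) (hqf : Summable (fun m => q (f m))) :
    q (∑' m, f m) ≤ ∑' m, q (f m) := by
  have hlip : LipschitzWith (Real.toNNReal (max C 0)) q := by
    apply LipschitzWith.of_dist_le_mul
    intro u v
    rw [Real.dist_eq, dist_eq_norm, Real.coe_toNNReal _ (le_max_right C 0)]
    have key : ∀ a b : X, q a - q b ≤ max C 0 * ‖a - b‖ := by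
      intro a b
      have h1 : q a ≤ q b + q (a - b) := by
        have := hqadd b (a - b)
        simpa using this
      have h2 : q (a - b) ≤ C * ‖a - b‖ := hqC _
      have h3 : C * ‖a - b‖ ≤ max C 0 * ‖a - b‖ :=
        mul_le_mul_of_nonneg_right (le_max_left _ _) (norm_nonneg _)
      linarith
    rw [abs_sub_le_iff]
    constructor
    · exact key u v
    · have := key v u
      rwa [show v - u = -(u - v) by abel, norm_neg] at this
  have h1 : Filter.Tendsto (fun k => ∑ i ∈ Finset.range k, f i) Filter.atTop
      (nhds (∑' m, f m)) := hf.hasSum.tendsto_sum_nat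
  have h2 : Filter.Tendsto (fun k => q (∑ i ∈ Finset.range k, f i)) Filter.atTop
      (nhds (q (∑' m, f m))) := (hlip.continuous.tendsto _).comp h1
  refine le_of_tendsto h2 ?_
  filter_upwards with k
  exact le_trans (q_finsum_le q hq0 hqadd f k)
    (Summable.sum_le_tsum _ (fun i _ => hqnn _) hqf)

lemma mem_pointwise_bound (B : AdmissibleSeqSpace) {s : ℤ → ℝ} (hs : B.mem s) (n : ℤ) :
    |s n| ≤ B.N / B.bnorm (fun k => if k = (0:ℤ) then (1:ℝ) else 0) * B.bnorm s := by
  set e0 : ℤ → ℝ := fun k => if k = (0:ℤ) then (1:ℝ) else 0 with he0def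
  set eN : ℤ → ℝ := fun k => if k = n then (1:ℝ) else 0 with heNdef
  have he0 : 0 < B.bnorm e0 := B.indicator_pos 0
  have heN : 0 < B.bnorm eN := B.indicator_pos n
  have h1 : |s n| * B.bnorm eN ≤ B.bnorm s := by
    have hb : B.bnorm ((s n) • eN) = |s n| * B.bnorm eN := B.bnorm_smul (s n) eN
    rw [← hb]
    apply B.mono_norm hs
    intro k
    by_cases hk : k = n
    · subst hk; simp [heNdef, Pi.smul_apply, abs_mul]
    · simp [heNdef, hk, Pi.smul_apply]
  have h2 : B.bnorm e0 ≤ B.N * B.bnorm eN := by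
    have := B.shift_norm (B.indicator_mem n) n
    have he : (fun k => (fun j => if j = n then (1:ℝ) else 0) (k + n)) = e0 := by
      funext k
      simp only [he0def]
      by_cases hk : k = 0
      · subst hk; simp
      · have : ¬ (k + n = n) := by omega
        simp [this, hk]
    rwa [he] at this
  have hN := B.N_pos
  have hsnn : 0 ≤ |s n| := abs_nonneg _
  rw [div_mul_eq_mul_div, le_div_iff₀ he0]
  nlinarith [B.bnorm_nonneg s]

end Aux
lemma series_mem (B : AdmissibleSeqSpace) {s : ℤ → ℝ} (hs : B.mem s)
    (hs0 : ∀ n, 0 ≤ s n) (a : ℕ → ℝ) (ha0 : ∀ m, 0 ≤ a m) (ha : Summable a)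
    (σ : ℕ → ℤ) :
    ∃ t : ℤ → ℝ, B.mem t ∧ (∀ n, 0 ≤ t n) ∧
      ∀ n, HasSum (fun m => a m * s (n + σ m)) (t n) := by
  classical
  set K : ℝ := B.N / B.bnorm (fun k => if k = (0:ℤ) then (1:ℝ) else 0) with hKdef
  have hK : 0 < K := div_pos B.N_pos (B.indicator_pos 0)
  have hbd : ∀ {w : ℤ → ℝ}, B.mem w → ∀ n, |w n| ≤ K * B.bnorm w :=
    fun hw n => mem_pointwise_bound B hw n
  have hsb : ∀ n, s n ≤ K * B.bnorm s := fun n => (le_abs_self _).trans (hbd hs n)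
  -- summability of each pointwise series
  have hsum : ∀ n, Summable (fun m => a m * s (n + σ m)) := by
    intro n
    apply Summable.of_nonneg_of_le
      (fun m => mul_nonneg (ha0 m) (hs0 _))
      (fun m => mul_le_mul_of_nonneg_left (hsb _) (ha0 m))
    exact ha.mul_right _
  -- finite blocks
  have hblock : ∀ F : Finset ℕ, B.mem (fun n => ∑ m ∈ F, a m * s (n + σ m)) ∧
      B.bnorm (fun n => ∑ m ∈ F, a m * s (n + σ m)) ≤
        (∑ m ∈ F, a m) * (B.N * B.bnorm s) := by
    intro F
    induction F using Finset.induction_on with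
    | empty =>
        constructor
        · simp only [Finset.sum_empty]; exact B.zero_mem
        · have : (fun n : ℤ => ∑ m ∈ (∅ : Finset ℕ), a m * s (n + σ m)) = 0 := by
            funext n; simp
          rw [this]
          have h0 : B.bnorm (0 : ℤ → ℝ) = 0 := (B.bnorm_eq_zero B.zero_mem).mpr rfl
          simp [h0]
    | insert j F' hm ih =>
        have hsingle_mem : B.mem (fun n => a j * s (n + σ j)) := by
          have := B.smul_mem (a j) (B.shift_mem hs (σ j))
          exact this
        have hsingle_norm : B.bnorm (fun n => a j * s (n + σ j)) ≤ a j * (B.N * B.bnorm s) := by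
          have h1 : B.bnorm ((a j) • (fun n => s (n + σ j))) =
              |a j| * B.bnorm (fun n => s (n + σ j)) := B.bnorm_smul _ _
          have h2 : B.bnorm (fun n => s (n + σ j)) ≤ B.N * B.bnorm s :=
            B.shift_norm hs (σ j)
          have h3 : (fun n : ℤ => a j * s (n + σ j)) = (a j) • (fun n => s (n + σ j)) := rfl
          rw [h3, h1, abs_of_nonneg (ha0 j)]
          exact mul_le_mul_of_nonneg_left h2 (ha0 j)
        have hfun : (fun n : ℤ => ∑ m ∈ insert j F', a m * s (n + σ m)) =
            (fun n => a j * s (n + σ j)) + (fun n => ∑ m ∈ F', a m * s (n + σ m)) := by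
          funext n
          simp [Finset.sum_insert hm]
        constructor
        · rw [hfun]; exact B.add_mem hsingle_mem ih.1
        · rw [hfun, Finset.sum_insert hm, add_mul]
          exact le_trans (B.bnorm_add_le hsingle_mem ih.1) (by linarith [ih.2])
  -- partial sums
  set u : ℕ → ℤ → ℝ := fun k n => ∑ m ∈ Finset.range k, a m * s (n + σ m) with hudef
  have hu_mem : ∀ k, B.mem (u k) := fun k => (hblock (Finset.range k)).1
  set c : ℝ := B.N * B.bnorm s with hcdef
  have hc0 : 0 ≤ c := mul_nonneg B.N_pos.le (B.bnorm_nonneg s)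
  -- Cauchy
  have hcauchy : ∀ ε : ℝ, 0 < ε → ∃ K' : ℕ, ∀ k l, K' ≤ k → K' ≤ l →
      B.bnorm (u k - u l) < ε := by
    intro ε hε
    have hA : CauchySeq (fun k => ∑ m ∈ Finset.range k, a m) :=
      ha.hasSum.tendsto_sum_nat.cauchySeq
    have hδ : 0 < ε / (c + 1) := div_pos hε (by linarith)
    obtain ⟨K', hK'⟩ := Metric.cauchySeq_iff.mp hA (ε / (c+1)) hδ
    refine ⟨K', ?_⟩
    have key : ∀ k l, K' ≤ k → K' ≤ l → l ≤ k → B.bnorm (u k - u l) < ε := by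
      intro k l hk hl hlk
      have hdiff : u k - u l = fun n => ∑ m ∈ Finset.Ico l k, a m * s (n + σ m) := by
        funext n
        have := Finset.sum_Ico_eq_sub (fun m => a m * s (n + σ m)) hlk
        simp only [Pi.sub_apply, hudef]
        rw [this]
      have h1 := (hblock (Finset.Ico l k)).2
      rw [← hdiff] at h1
      have h2 : (∑ m ∈ Finset.Ico l k, a m) =
          (∑ m ∈ Finset.range k, a m) - (∑ m ∈ Finset.range l, a m) :=
        Finset.sum_Ico_eq_sub _ hlk
      have h3 := hK' k hk l hl
      rw [Real.dist_eq] at h3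
      have h4 : (∑ m ∈ Finset.Ico l k, a m) ≤ ε / (c+1) := by
        rw [h2]
        exact (le_abs_self _).trans h3.le
      have h5 : ε / (c+1) * (c+1) = ε := div_mul_cancel₀ _ (by linarith)
      calc B.bnorm (u k - u l) ≤ (∑ m ∈ Finset.Ico l k, a m) * c := h1
        _ ≤ ε / (c+1) * c := mul_le_mul_of_nonneg_right h4 hc0
        _ < ε / (c+1) * (c+1) := by
            apply mul_lt_mul_of_pos_left (by linarith) hδ
        _ = ε := h5
    intro k l hk hl
    rcases le_total l k with h | h
    · exact key k l hk hl h
    · have hsymm : B.bnorm (u k - u l) = B.bnorm (u l - u k) := by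
        have : u k - u l = (-1 : ℝ) • (u l - u k) := by funext n; simp only [Pi.sub_apply, Pi.smul_apply, smul_eq_mul]; ring
        rw [this, B.bnorm_smul]; simp
      rw [hsymm]; exact key l k hl hk h
  obtain ⟨t, htmem, htconv⟩ := B.complete u hu_mem hcauchy
  -- pointwise convergence of u k n to t n
  have hpt : ∀ n, Filter.Tendsto (fun k => u k n) Filter.atTop (nhds (t n)) := by
    intro n
    rw [Metric.tendsto_atTop]
    intro ε hε
    obtain ⟨K', hK'⟩ := htconv (ε / K) (div_pos hε hK)
    refine ⟨K', fun k hk => ?_⟩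
    have hmemd : B.mem (u k - t) := by
      have : u k - t = u k + (-1 : ℝ) • t := by funext n'; simp only [Pi.sub_apply, Pi.add_apply, Pi.smul_apply, smul_eq_mul]; ring
      rw [this]
      exact B.add_mem (hu_mem k) (B.smul_mem _ htmem)
    have h1 : |u k n - t n| ≤ K * B.bnorm (u k - t) := hbd hmemd n
    have h2 : K * B.bnorm (u k - t) < K * (ε / K) :=
      mul_lt_mul_of_pos_left (hK' k hk) hK
    rw [Real.dist_eq]
    have h3 : K * (ε / K) = ε := mul_div_cancel₀ _ hK.ne'
    linarith
  refine ⟨t, htmem, ?_, ?_⟩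
  · intro n
    have h1 : ∀ k, 0 ≤ u k n := fun k =>
      Finset.sum_nonneg fun m _ => mul_nonneg (ha0 m) (hs0 _)
    exact le_of_tendsto_of_tendsto tendsto_const_nhds (hpt n)
      (Filter.Eventually.of_forall h1)
  · intro n
    have h1 : Filter.Tendsto (fun k => u k n) Filter.atTop
        (nhds (∑' m, a m * s (n + σ m))) := (hsum n).hasSum.tendsto_sum_nat
    have h2 : t n = ∑' m, a m * s (n + σ m) := tendsto_nhds_unique (hpt n) h1
    rw [h2]
    exact (hsum n).hasSum
def fSeq {X : Type*} [NormedAddCommGroup X] [NormedSpace ℝ X]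
    (A P : ℤ → X →L[ℝ] X) (y : ℤ → X) (n : ℤ) (m : ℕ) : X :=
  opComp A m (n - m) (P (n - m) (y (n - m)))

def gSeq {X : Type*} [NormedAddCommGroup X] [NormedSpace ℝ X]
    (P : ℤ → X →L[ℝ] X) (Ainv : ℕ → ℤ → X → X) (y : ℤ → X) (n : ℤ) (m : ℕ) : X :=
  Ainv (m + 1) (n + (m + 1)) (y (n + (m + 1)) - P (n + (m + 1)) (y (n + (m + 1))))

theorem stmt9 (B : AdmissibleSeqSpace) {X : Type*} [NormedAddCommGroup X]
    [NormedSpace ℝ X] [CompleteSpace X]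
    (A : ℤ → X →L[ℝ] X)
    (nn : ℤ → X → ℝ)
    (hnadd : ∀ (n : ℤ) (u v : X), nn n (u + v) ≤ nn n u + nn n v)
    (hnsmul : ∀ (n : ℤ) (c : ℝ) (v : X), nn n (c • v) = |c| * nn n v)
    (heq : ∀ n : ℤ, ∃ c C : ℝ, 0 < c ∧ 0 < C ∧
      ∀ v : X, c * ‖v‖ ≤ nn n v ∧ nn n v ≤ C * ‖v‖)
    (P : ℤ → X →L[ℝ] X)
    (hproj : ∀ (m : ℤ) (v : X), P m (P m v) = P m v)
    (hcomm : ∀ (m : ℤ) (v : X), A m (P m v) = P (m + 1) (A m v))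
    (hbij : ∀ m : ℤ, Set.BijOn (A m) {v : X | P m v = 0} {v : X | P (m + 1) v = 0})
    (D lam mu : ℝ) (hD : 0 < D) (hlam0 : 0 < lam) (hlam1 : lam < 1) (hmu : 1 < mu)
    (hstable : ∀ (m : ℤ) (v : X) (k : ℕ),
      nn (m + k) (opComp A k m (P m v)) ≤ D * lam ^ k * nn m v)
    (Ainv : ℕ → ℤ → X → X)
    (hAinv_ker : ∀ (k : ℕ) (m : ℤ) (v : X), P m v = 0 → P (m - k) (Ainv k m v) = 0)
    (hAinv_comp : ∀ (k : ℕ) (m : ℤ) (v : X), P m v = 0 → opComp A k (m - k) (Ainv k m v) = v)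
    (hunstable : ∀ (k : ℕ) (m : ℤ) (v : X),
      nn (m - k) (Ainv k m (v - P m v)) ≤ D * (mu ^ k)⁻¹ * nn m v) :
    ∀ y : ℤ → X, B.mem (fun n => nn n (y n)) →
      B.mem (fun n => nn n
        ((∑' m : ℕ, opComp A m (n - m) (P (n - m) (y (n - m)))) -
          ∑' m : ℕ, Ainv (m + 1) (n + (m + 1))
            (y (n + (m + 1)) - P (n + (m + 1)) (y (n + (m + 1)))))) ∧
      ∀ n : ℤ,
        ((∑' m : ℕ, opComp A m (n - m) (P (n - m) (y (n - m)))) -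
          ∑' m : ℕ, Ainv (m + 1) (n + (m + 1))
            (y (n + (m + 1)) - P (n + (m + 1)) (y (n + (m + 1))))) -
        A (n - 1)
          ((∑' m : ℕ, opComp A m (n - 1 - m) (P (n - 1 - m) (y (n - 1 - m)))) -
            ∑' m : ℕ, Ainv (m + 1) (n - 1 + (m + 1))
              (y (n - 1 + (m + 1)) - P (n - 1 + (m + 1)) (y (n - 1 + (m + 1))))) =
        y n := by
  intro y hy
  -- fold the series terms into fSeq / gSeq
  have hfd : ∀ (n : ℤ) (m : ℕ),
      opComp A m (n - m) (P (n - m) (y (n - m))) = fSeq A P y n m := fun _ _ => rfl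
  have hgd : ∀ (n : ℤ) (m : ℕ),
      Ainv (m + 1) (n + (m + 1)) (y (n + (m + 1)) - P (n + (m + 1)) (y (n + (m + 1))))
        = gSeq P Ainv y n m := fun _ _ => rfl
  simp only [hfd, hgd]
  -- basic facts about nn
  have hnn0 : ∀ (n : ℤ) (v : X), 0 ≤ nn n v := by
    intro n v
    obtain ⟨c, C, hc, _, h⟩ := heq n
    exact le_trans (mul_nonneg hc.le (norm_nonneg v)) (h v).1
  have hnzero : ∀ n : ℤ, nn n (0 : X) = 0 := by
    intro n
    have := hnsmul n 0 0
    simpa using this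
  have hnneg : ∀ (n : ℤ) (v : X), nn n (-v) = nn n v := by
    intro n v
    have := hnsmul n (-1) v
    simpa using this
  have hnsub : ∀ (n : ℤ) (u v : X), nn n (u - v) ≤ nn n u + nn n v := by
    intro n u v
    have := hnadd n u (-v)
    rw [hnneg] at this
    simpa [sub_eq_add_neg] using this
  have hnormle : ∀ n : ℤ, ∃ ci : ℝ, 0 ≤ ci ∧ ∀ v : X, ‖v‖ ≤ ci * nn n v := by
    intro n
    obtain ⟨c, C, hc, _, h⟩ := heq n
    refine ⟨c⁻¹, inv_nonneg.mpr hc.le, fun v => ?_⟩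
    rw [inv_mul_eq_div, le_div_iff₀ hc, mul_comm]
    exact (h v).1
  -- the scalar sequence s and its uniform bound
  set s : ℤ → ℝ := fun n => nn n (y n) with hsdef
  have hs0 : ∀ n, 0 ≤ s n := fun n => hnn0 n (y n)
  set K : ℝ := B.N / B.bnorm (fun k => if k = (0:ℤ) then (1:ℝ) else 0) with hKdef
  have hK : 0 < K := div_pos B.N_pos (B.indicator_pos 0)
  set K0 : ℝ := K * B.bnorm s with hK0def
  have hsb : ∀ n, s n ≤ K0 := fun n =>
    (le_abs_self _).trans (mem_pointwise_bound B hy n)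
  have hK00 : 0 ≤ K0 := le_trans (hs0 0) (hsb 0)
  set r : ℝ := mu⁻¹ with hrdef
  have hr0 : 0 ≤ r := inv_nonneg.mpr (by linarith)
  have hr1 : r < 1 := inv_lt_one_of_one_lt₀ hmu
  -- termwise bounds
  have hfb : ∀ (n : ℤ) (m : ℕ),
      nn n (fSeq A P y n m) ≤ D * lam ^ m * s (n + -(m:ℤ)) := by
    intro n m
    have h := hstable (n - m) (y (n - m)) m
    rw [show (n - (m:ℤ)) + (m:ℤ) = n by ring] at h
    rw [show n + -(m:ℤ) = n - (m:ℤ) by ring]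
    exact h
  have hgb : ∀ (n : ℤ) (m : ℕ),
      nn n (gSeq P Ainv y n m) ≤ D * r ^ (m+1) * s (n + ((m+1:ℕ):ℤ)) := by
    intro n m
    have h := hunstable (m+1) (n + ((m+1:ℕ):ℤ)) (y (n + ((m+1:ℕ):ℤ)))
    rw [show (n + ((m+1:ℕ):ℤ)) - ((m+1:ℕ):ℤ) = n by ring] at h
    rw [← inv_pow] at h
    exact h
  have hfbK : ∀ (n : ℤ) (m : ℕ), nn n (fSeq A P y n m) ≤ D * lam ^ m * K0 := by
    intro n m
    refine le_trans (hfb n m) (mul_le_mul_of_nonneg_left (hsb _) ?_)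
    positivity
  have hgbK : ∀ (n : ℤ) (m : ℕ), nn n (gSeq P Ainv y n m) ≤ D * r ^ (m+1) * K0 := by
    intro n m
    refine le_trans (hgb n m) (mul_le_mul_of_nonneg_left (hsb _) ?_)
    positivity
  -- summability of the bounding geometric series
  have hgeo1 : Summable (fun m : ℕ => D * lam ^ m * K0) := by
    have h : (fun m : ℕ => D * lam ^ m * K0) = fun m => (D * K0) * lam ^ m := by
      funext m; ring
    rw [h]
    exact (summable_geometric_of_lt_one hlam0.le hlam1).mul_left _
  have hgeo2 : Summable (fun m : ℕ => D * r ^ (m+1) * K0) := by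
    have h : (fun m : ℕ => D * r ^ (m+1) * K0) = fun m => (D * r * K0) * r ^ m := by
      funext m; ring
    rw [h]
    exact (summable_geometric_of_lt_one hr0 hr1).mul_left _
  have hfq : ∀ n : ℤ, Summable (fun m => nn n (fSeq A P y n m)) := fun n =>
    Summable.of_nonneg_of_le (fun m => hnn0 _ _) (fun m => hfbK n m) hgeo1
  have hgq : ∀ n : ℤ, Summable (fun m => nn n (gSeq P Ainv y n m)) := fun n =>
    Summable.of_nonneg_of_le (fun m => hnn0 _ _) (fun m => hgbK n m) hgeo2
  -- summability in X
  have hfsum : ∀ n : ℤ, Summable (fun m => fSeq A P y n m) := by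
    intro n
    obtain ⟨ci, hci, hle⟩ := hnormle n
    refine Summable.of_norm_bounded
      (hgeo1.mul_left ci) (fun m => ?_)
    exact le_trans (hle _) (mul_le_mul_of_nonneg_left (hfbK n m) hci)
  have hgsum : ∀ n : ℤ, Summable (fun m => gSeq P Ainv y n m) := by
    intro n
    obtain ⟨ci, hci, hle⟩ := hnormle n
    refine Summable.of_norm_bounded
      (hgeo2.mul_left ci) (fun m => ?_)
    exact le_trans (hle _) (mul_le_mul_of_nonneg_left (hgbK n m) hci)
  -- the dominating sequences from the admissible space
  obtain ⟨t1, ht1m, ht1nn, ht1⟩ := series_mem B hy hs0 (fun m => D * lam ^ m)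
    (fun m => by positivity)
    ((summable_geometric_of_lt_one hlam0.le hlam1).mul_left D) (fun m => -(m:ℤ))
  obtain ⟨t2, ht2m, ht2nn, ht2⟩ := series_mem B hy hs0 (fun m => D * r ^ (m+1))
    (fun m => by positivity)
    (by
      have h : (fun m : ℕ => D * r ^ (m+1)) = fun m => (D * r) * r ^ m := by
        funext m; ring
      rw [h]
      exact (summable_geometric_of_lt_one hr0 hr1).mul_left _)
    (fun m => ((m+1:ℕ):ℤ))
  constructor
  · -- membership
    refine B.mono_mem (B.add_mem ht1m ht2m) ?_
    intro n
    obtain ⟨c, C, hc, hC, h⟩ := heq n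
    have hx1 : nn n (∑' m, fSeq A P y n m) ≤ t1 n := by
      have h1 : nn n (∑' m, fSeq A P y n m) ≤ ∑' m, nn n (fSeq A P y n m) :=
        q_tsum_le (nn n) (hnzero n) (hnadd n) (hnneg n) (hnn0 n) C
          (fun v => (h v).2) _ (hfsum n) (hfq n)
      have h2 : ∑' m, nn n (fSeq A P y n m) ≤ ∑' m : ℕ, D * lam ^ m * s (n + -(m:ℤ)) :=
        Summable.tsum_le_tsum (hfb n) (hfq n) (ht1 n).summable
      rw [(ht1 n).tsum_eq] at h2
      linarith
    have hx2 : nn n (∑' m, gSeq P Ainv y n m) ≤ t2 n := by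
      have h1 : nn n (∑' m, gSeq P Ainv y n m) ≤ ∑' m, nn n (gSeq P Ainv y n m) :=
        q_tsum_le (nn n) (hnzero n) (hnadd n) (hnneg n) (hnn0 n) C
          (fun v => (h v).2) _ (hgsum n) (hgq n)
      have h2 : ∑' m, nn n (gSeq P Ainv y n m) ≤
          ∑' m : ℕ, D * r ^ (m+1) * s (n + ((m+1:ℕ):ℤ)) :=
        Summable.tsum_le_tsum (hgb n) (hgq n) (ht2 n).summable
      rw [(ht2 n).tsum_eq] at h2
      linarith
    rw [abs_of_nonneg (hnn0 n _), Pi.add_apply,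
      abs_of_nonneg (add_nonneg (ht1nn n) (ht2nn n))]
    calc nn n ((∑' m, fSeq A P y n m) - ∑' m, gSeq P Ainv y n m)
        ≤ nn n (∑' m, fSeq A P y n m) + nn n (∑' m, gSeq P Ainv y n m) := hnsub n _ _
      _ ≤ t1 n + t2 n := add_le_add hx1 hx2
  · -- the difference equation
    intro n
    -- stable part
    have hf0 : fSeq A P y n 0 = P n (y n) := by
      simp [fSeq, opComp]
    have hf_succ : ∀ m : ℕ, fSeq A P y n (m+1) = A (n-1) (fSeq A P y (n-1) m) := by
      intro m
      show opComp A (m+1) (n - ((m+1:ℕ):ℤ)) (P (n - ((m+1:ℕ):ℤ)) (y (n - ((m+1:ℕ):ℤ)))) = _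
      rw [show n - ((m+1:ℕ):ℤ) = n - 1 - (m:ℤ) by push_cast; ring]
      show A ((n - 1 - (m:ℤ)) + (m:ℤ))
        (opComp A m (n - 1 - (m:ℤ)) (P (n - 1 - (m:ℤ)) (y (n - 1 - (m:ℤ))))) = _
      rw [show (n - 1 - (m:ℤ)) + (m:ℤ) = n - 1 by ring]
      rfl
    have e1 : A (n-1) (∑' m, fSeq A P y (n-1) m) =
        (∑' m, fSeq A P y n m) - P n (y n) := by
      have hmap := (hfsum (n-1)).hasSum.mapL (A (n-1))
      rw [show (fun m => A (n-1) (fSeq A P y (n-1) m)) = fun m => fSeq A P y n (m+1)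
        from funext fun m => (hf_succ m).symm] at hmap
      rw [← hmap.tsum_eq, Summable.tsum_eq_zero_add (hfsum n), hf0]
      abel
    -- unstable part
    have hQ : ∀ k : ℤ, P k (y k - P k (y k)) = 0 := by
      intro k
      rw [map_sub, hproj, sub_self]
    have hkey : ∀ (k : ℕ) (v : X), P (n + (k:ℤ)) v = 0 →
        A (n-1) (Ainv (k+1) (n + (k:ℤ)) v) = Ainv k (n + (k:ℤ)) v := by
      intro k v hv
      have hw_ker : P (n - 1) (Ainv (k+1) (n + (k:ℤ)) v) = 0 := by
        have h := hAinv_ker (k+1) (n + (k:ℤ)) v hv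
        rwa [show (n + (k:ℤ)) - ((k+1:ℕ):ℤ) = n - 1 by push_cast; ring] at h
      have hw_comp : opComp A (k+1) (n-1) (Ainv (k+1) (n + (k:ℤ)) v) = v := by
        have h := hAinv_comp (k+1) (n + (k:ℤ)) v hv
        rwa [show (n + (k:ℤ)) - ((k+1:ℕ):ℤ) = n - 1 by push_cast; ring] at h
      have hw'_ker : P n (Ainv k (n + (k:ℤ)) v) = 0 := by
        have h := hAinv_ker k (n + (k:ℤ)) v hv
        rwa [show (n + (k:ℤ)) - (k:ℤ) = n by ring] at h
      have hw'_comp : opComp A k n (Ainv k (n + (k:ℤ)) v) = v := by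
        have h := hAinv_comp k (n + (k:ℤ)) v hv
        rwa [show (n + (k:ℤ)) - (k:ℤ) = n by ring] at h
      have hker2 : P n (A (n-1) (Ainv (k+1) (n + (k:ℤ)) v)) = 0 := by
        have h2 := hcomm (n-1) (Ainv (k+1) (n + (k:ℤ)) v)
        rw [hw_ker, map_zero] at h2
        rw [show n - 1 + 1 = n by ring] at h2
        exact h2.symm
      have hcomp2 : opComp A k n (A (n-1) (Ainv (k+1) (n + (k:ℤ)) v)) = v := by
        have h3 : opComp A (k+1) (n-1) (Ainv (k+1) (n + (k:ℤ)) v)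
            = opComp A k ((n-1)+1) (A (n-1) (Ainv (k+1) (n + (k:ℤ)) v)) := by
          rw [opComp_succ' A k (n-1)]; rfl
        rw [show (n:ℤ) - 1 + 1 = n by ring] at h3
        rw [← h3]; exact hw_comp
      exact opComp_inj A P hcomm hbij k n _ _ hker2 hw'_ker (hcomp2.trans hw'_comp.symm)
    have hg_succ : ∀ m : ℕ, A (n-1) (gSeq P Ainv y (n-1) m) =
        Ainv m (n + (m:ℤ)) (y (n + (m:ℤ)) - P (n + (m:ℤ)) (y (n + (m:ℤ)))) := by
      intro m
      show A (n-1) (Ainv (m+1) ((n-1) + ((m+1:ℕ):ℤ))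
        (y ((n-1) + ((m+1:ℕ):ℤ)) - P ((n-1) + ((m+1:ℕ):ℤ)) (y ((n-1) + ((m+1:ℕ):ℤ))))) = _
      rw [show (n-1) + ((m+1:ℕ):ℤ) = n + (m:ℤ) by push_cast; ring]
      exact hkey m _ (hQ _)
    have hG0 : Ainv 0 (n + ((0:ℕ):ℤ)) (y (n + ((0:ℕ):ℤ)) -
        P (n + ((0:ℕ):ℤ)) (y (n + ((0:ℕ):ℤ)))) = y n - P n (y n) := by
      rw [show n + ((0:ℕ):ℤ) = n by simp]
      have h := hAinv_comp 0 n (y n - P n (y n)) (hQ n)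
      simpa [opComp] using h
    have hGsucc : ∀ m : ℕ, Ainv (m+1) (n + ((m+1:ℕ):ℤ)) (y (n + ((m+1:ℕ):ℤ)) -
        P (n + ((m+1:ℕ):ℤ)) (y (n + ((m+1:ℕ):ℤ)))) = gSeq P Ainv y n m :=
      fun m => rfl
    have e2 : A (n-1) (∑' m, gSeq P Ainv y (n-1) m) =
        (y n - P n (y n)) + ∑' m, gSeq P Ainv y n m := by
      have hmap := (hgsum (n-1)).hasSum.mapL (A (n-1))
      rw [show (fun m => A (n-1) (gSeq P Ainv y (n-1) m)) =
        fun m : ℕ => Ainv m (n + (m:ℤ)) (y (n + (m:ℤ)) - P (n + (m:ℤ)) (y (n + (m:ℤ))))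
        from funext hg_succ] at hmap
      rw [← hmap.tsum_eq, Summable.tsum_eq_zero_add hmap.summable, hG0]
      exact congrArg _ (tsum_congr hGsucc)
    rw [map_sub, e1, e2]
    abel
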